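/- Every (m,n) toric inequality evaluated on a K4-vector gives either 0 or 2; it gives 2 if and only if the members consist of three regions of one type (A or B) whose counting function g is {1,1,1} and one region of the other type. -/

import Mathlib

set_option linter.unusedSectionVars false

/-- The union of `c` consecutively indexed `A`-regions starting at `A_i`. -/
def ASeg (m n : ℕ) [NeZero m] [NeZero n] (i : ZMod m) (c : ℕ) :
    Finset (ZMod m ⊕ ZMod n) :=
  (Finset.range c).image (fun d : ℕ => Sum.inl (i + (d : ZMod m)))

/-- The union of `c` consecutively indexed `B`-regions starting at `B_j`. -/
def BSeg (m n : ℕ) [NeZero m] [NeZero n] (j : ZMod n) (c : ℕ) :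
    Finset (ZMod m ⊕ ZMod n) :=
  (Finset.range c).image (fun d : ℕ => Sum.inr (j + (d : ZMod n)))

open Finset

section Cyc
variable {N : ℕ} [NeZero N]

def winS (c : ℕ) (j : ZMod N) : Finset (ZMod N) := (range c).image fun d : ℕ => j + (d : ZMod N)

def rh (L : ℕ) (x : ZMod N) : Finset (ZMod N) := (Finset.Icc 1 L).image fun d : ℕ => x + (d : ZMod N)

lemma natCast_inj' {d e : ℕ} (hd : d < N) (he : e < N) (h : (d : ZMod N) = (e : ZMod N)) : d = e := by
  have := congrArg ZMod.val h
  rwa [ZMod.val_cast_of_lt hd, ZMod.val_cast_of_lt he] at this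

lemma mem_winS {c : ℕ} {j x : ZMod N} : x ∈ winS c j ↔ ∃ d < c, x = j + (d : ZMod N) := by
  simp [winS, eq_comm]

lemma mem_winS_off {c e : ℕ} (hc : c ≤ N) (he : e < N) {j x : ZMod N}
    (hx : x = j + (e : ZMod N)) : x ∈ winS c j ↔ e < c := by
  subst hx; rw [mem_winS]
  constructor
  · rintro ⟨d, hd, hde⟩
    have h2 : (e : ZMod N) = (d : ZMod N) := add_left_cancel hde
    rwa [natCast_inj' he (lt_of_lt_of_le hd hc) h2]
  · intro h; exact ⟨e, h, rfl⟩

lemma mem_rh_off {L e : ℕ} (hL : L < N) (he : e < N) {x y : ZMod N}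
    (hy : y = x + (e : ZMod N)) : y ∈ rh L x ↔ 1 ≤ e ∧ e ≤ L := by
  subst hy; rw [rh, Finset.mem_image]
  constructor
  · rintro ⟨d, hd, hde⟩
    rw [Finset.mem_Icc] at hd
    have h2 : (d : ZMod N) = (e : ZMod N) := add_left_cancel hde
    have := natCast_inj' (lt_of_le_of_lt hd.2 hL) he h2
    omega
  · intro h; exact ⟨e, Finset.mem_Icc.mpr h, rfl⟩

lemma not_self_mem_rh {L : ℕ} (hL : L < N) (x : ZMod N) : x ∉ rh L x := by
  intro hx
  have h0 : (0 : ℕ) < N := Nat.pos_of_ne_zero (NeZero.ne N)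
  have := (mem_rh_off (e := 0) hL h0 (by simp)).mp hx
  omega

lemma exists_off {x y : ZMod N} (h : x ≠ y) :
    ∃ e : ℕ, 1 ≤ e ∧ e ≤ N - 1 ∧ y = x + (e : ZMod N) := by
  refine ⟨(y - x).val, ?_, ?_, ?_⟩
  · have h0 : (y - x).val ≠ 0 := by
      intro h0
      exact (sub_ne_zero.mpr (Ne.symm h)) (by rwa [← ZMod.val_eq_zero])
    omega
  · have := ZMod.val_lt (y - x); omega
  · rw [ZMod.natCast_val, ZMod.cast_id]; ring

lemma exactly_one {L : ℕ} (hN : N = 2 * L + 1) {x y : ZMod N} (h : x ≠ y) :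
    (y ∈ rh L x ↔ ¬ (x ∈ rh L y)) := by
  obtain ⟨e, he1, he2, rfl⟩ := exists_off h
  have hL : L < N := by omega
  have he : e < N := by omega
  have h1 : x + (e : ZMod N) ∈ rh L x ↔ 1 ≤ e ∧ e ≤ L := mem_rh_off hL he rfl
  have hx : x = (x + (e : ZMod N)) + ((N - e : ℕ) : ZMod N) := by
    push_cast [Nat.cast_sub (le_of_lt he)]
    rw [ZMod.natCast_self]; ring
  have h2 : x ∈ rh L (x + (e : ZMod N)) ↔ 1 ≤ N - e ∧ N - e ≤ L :=
    mem_rh_off (e := N - e) hL (by omega) hx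
  rw [h1, h2]
  omega
end Cyc

section Cyc2
variable {N : ℕ} [NeZero N]

lemma filter_win_eq (x : ZMod N) (c : ℕ) :
    (univ.filter fun j : ZMod N => x ∈ winS c j) = (range c).image fun d : ℕ => x - (d : ZMod N) := by
  ext j
  simp only [mem_filter, mem_univ, true_and, mem_winS, Finset.mem_image, Finset.mem_range]
  constructor
  · rintro ⟨d, hd, hxd⟩; exact ⟨d, hd, by rw [hxd]; ring⟩
  · rintro ⟨d, hd, rfl⟩; exact ⟨d, hd, by ring⟩

lemma card_win (x : ZMod N) {c : ℕ} (hc : c ≤ N) :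
    (univ.filter fun j : ZMod N => x ∈ winS c j).card = c := by
  rw [filter_win_eq x c, Finset.card_image_of_injOn, Finset.card_range]
  intro d hd d' hd' hdd
  simp only [Finset.mem_coe, Finset.mem_range] at hd hd'
  have h2 : (d : ZMod N) = (d' : ZMod N) := sub_right_injective hdd
  exact natCast_inj' (lt_of_lt_of_le hd hc) (lt_of_lt_of_le hd' hc) h2

variable {L : ℕ}

lemma card_win2 (hN : N = 2*L+1) {x y : ZMod N} {e : ℕ} (he1 : 1 ≤ e) (he2 : e ≤ L)
    (hxy : y = x + (e : ZMod N)) :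
    (univ.filter fun j : ZMod N => x ∈ winS L j ∧ y ∈ winS L j).card = L - e := by
  have hfe : (univ.filter fun j : ZMod N => x ∈ winS L j ∧ y ∈ winS L j)
      = (range (L - e)).image fun d : ℕ => x - (d : ZMod N) := by
    ext j
    simp only [mem_filter, mem_univ, true_and, mem_winS, Finset.mem_image, Finset.mem_range]
    constructor
    · rintro ⟨⟨d, hd, hxd⟩, ⟨d', hd', hyd⟩⟩
      have hde : (d' : ZMod N) = ((d + e : ℕ) : ZMod N) := by
        have h3 : j + (d' : ZMod N) = j + ((d+e:ℕ) : ZMod N) := by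
          rw [← hyd, hxy, hxd]; push_cast; ring
        exact add_left_cancel h3
      have hd'' : d' = d + e := natCast_inj' (by omega) (by omega) hde
      exact ⟨d, by omega, by rw [hxd]; ring⟩
    · rintro ⟨d, hd, rfl⟩
      constructor
      · exact ⟨d, by omega, by ring⟩
      · exact ⟨d + e, by omega, by rw [hxy]; push_cast; ring⟩
  rw [hfe, Finset.card_image_of_injOn, Finset.card_range]
  intro d hd d' hd' hdd
  simp only [Finset.mem_coe, Finset.mem_range] at hd hd'
  exact natCast_inj' (by omega) (by omega) (sub_right_injective hdd)

lemma card_win3_zero (hN : N = 2*L+1) {x : ZMod N} {e1 e2 : ℕ} (h1a : 1 ≤ e1) (h1b : e1 ≤ L)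
    (h2a : 1 ≤ e2) (h2b : e2 ≤ L) (hE : L < e1 + e2) :
    (univ.filter fun j : ZMod N => x ∈ winS L j ∧ x + (e1 : ZMod N) ∈ winS L j
      ∧ x + ((e1 + e2 : ℕ) : ZMod N) ∈ winS L j) = ∅ := by
  ext j
  simp only [mem_filter, mem_univ, true_and, mem_winS, Finset.notMem_empty, iff_false, not_and]
  rintro ⟨d, hd, hxd⟩ ⟨d1, hd1, h1⟩ ⟨d2, hd2, h2⟩
  have hc1 : (d1 : ZMod N) = ((d + e1 : ℕ) : ZMod N) := by
    have h3 : j + (d1 : ZMod N) = j + ((d + e1 : ℕ) : ZMod N) := by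
      rw [← h1, hxd]; push_cast; ring
    exact add_left_cancel h3
  have hd1' : d1 = d + e1 := natCast_inj' (by omega) (by omega) hc1
  have hc2 : (d2 : ZMod N) = ((d + (e1 + e2) : ℕ) : ZMod N) := by
    have h3 : j + (d2 : ZMod N) = j + ((d + (e1 + e2) : ℕ) : ZMod N) := by
      rw [← h2, hxd]; push_cast; ring
    exact add_left_cancel h3
  have hd2' : d2 = d + (e1 + e2) := natCast_inj' (by omega) (by omega) hc2
  omega

lemma filter_win3_linear (hN : N = 2*L+1) {x : ZMod N} {e1 e2 : ℕ} (h1a : 1 ≤ e1)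
    (h2a : 1 ≤ e2) (hE : e1 + e2 ≤ L) :
    (univ.filter fun j : ZMod N => x ∈ winS L j ∧ x + (e1 : ZMod N) ∈ winS L j
      ∧ x + ((e1 + e2 : ℕ) : ZMod N) ∈ winS L j)
    = (univ.filter fun j : ZMod N => x ∈ winS L j ∧ x + ((e1 + e2 : ℕ) : ZMod N) ∈ winS L j) := by
  ext j
  simp only [mem_filter, mem_univ, true_and, mem_winS]
  constructor
  · rintro ⟨hx, _, h2⟩; exact ⟨hx, h2⟩
  · rintro ⟨⟨d, hd, hxd⟩, ⟨d2, hd2, h2⟩⟩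
    have hc2 : (d2 : ZMod N) = ((d + (e1 + e2) : ℕ) : ZMod N) := by
      have h3 : j + (d2 : ZMod N) = j + ((d + (e1 + e2) : ℕ) : ZMod N) := by
        rw [← h2, hxd]; push_cast; ring
      exact add_left_cancel h3
    have hd2' : d2 = d + (e1 + e2) := natCast_inj' (by omega) (by omega) hc2
    refine ⟨⟨d, hd, hxd⟩, ⟨d + e1, by omega, by rw [hxd]; push_cast; ring⟩, ⟨d2, hd2, h2⟩⟩

lemma sum_gamma (hN : N = 2*L+1) {κ : ℕ} (x : Fin κ → ZMod N) (hx : Function.Injective x) :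
    2 * (∑ t, (univ.filter fun s => x s ∈ rh L (x t)).card) = κ * (κ - 1) := by
  have hL : L < N := by omega
  have hcf : (∑ t, (univ.filter fun s => x s ∈ rh L (x t)).card)
      = ∑ t, ∑ s, (if x s ∈ rh L (x t) then 1 else 0) := by
    refine Finset.sum_congr rfl fun t _ => ?_
    rw [Finset.card_filter]
  rw [hcf, two_mul]
  nth_rewrite 2 [Finset.sum_comm]
  rw [← Finset.sum_add_distrib]
  have key : ∀ t s : Fin κ, ((if x s ∈ rh L (x t) then 1 else 0)
      + (if x t ∈ rh L (x s) then 1 else 0) : ℕ) = if s = t then 0 else 1 := by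
    intro t s
    by_cases hst : s = t
    · subst hst; simp [not_self_mem_rh hL]
    · have hne : x t ≠ x s := fun hc => hst (hx hc).symm
      have hiff := exactly_one hN hne
      by_cases h1 : x s ∈ rh L (x t)
      · simp [h1, hiff.mp h1, hst]
      · have h2 : x t ∈ rh L (x s) := by
          by_contra hc; exact h1 (hiff.mpr hc)
        simp [h1, h2, hst]
  have hrow : ∀ t : Fin κ, ((∑ s, (if x s ∈ rh L (x t) then (1:ℕ) else 0))
      + ∑ s, (if x t ∈ rh L (x s) then (1:ℕ) else 0)) = κ - 1 := by
    intro t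
    rw [← Finset.sum_add_distrib, Finset.sum_congr rfl fun s _ => key t s]
    have h1 : (∑ s : Fin κ, (if s = t then (1:ℕ) else 0)) = 1 := by simp
    have h2 : (∑ s : Fin κ, ((if s = t then (0:ℕ) else 1) + (if s = t then 1 else 0))) = κ := by
      have hone : ∀ s : Fin κ, ((if s = t then (0:ℕ) else 1) + (if s = t then 1 else 0)) = 1 :=
        fun s => by by_cases hs : s = t <;> simp [hs]
      rw [Finset.sum_congr rfl fun s _ => hone s]
      simp [Finset.card_univ]
    rw [Finset.sum_add_distrib, h1] at h2
    have hκ : 1 ≤ κ := by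
      have := Fintype.card_pos_iff.mpr ⟨t⟩
      simp at this; omega
    omega
  rw [Finset.sum_congr rfl fun t _ => hrow t]
  simp [Finset.card_univ, Nat.mul_comm]

lemma gamma_le (hN : N = 2*L+1) {κ : ℕ} (x : Fin κ → ZMod N) (t : Fin κ) :
    (univ.filter fun s => x s ∈ rh L (x t)).card ≤ κ - 1 := by
  have hL : L < N := by omega
  have hsub : (univ.filter fun s => x s ∈ rh L (x t)) ⊆ univ.erase t := by
    intro s hs
    rw [Finset.mem_filter] at hs
    rw [Finset.mem_erase]
    refine ⟨?_, Finset.mem_univ s⟩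
    intro hst; subst hst
    exact not_self_mem_rh hL (x s) hs.2
  have := Finset.card_le_card hsub
  rwa [Finset.card_erase_of_mem (Finset.mem_univ t), Finset.card_univ, Fintype.card_fin] at this

lemma pair_off (hN : N = 2*L+1) {u v : ZMod N} (h : u ≠ v) :
    ∃ e : ℕ, 1 ≤ e ∧ e ≤ L ∧ (v = u + (e : ZMod N) ∨ u = v + (e : ZMod N)) := by
  obtain ⟨e, he1, he2, hv⟩ := exists_off h
  by_cases hc : e ≤ L
  · exact ⟨e, he1, hc, Or.inl hv⟩
  · refine ⟨N - e, by omega, by omega, Or.inr ?_⟩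
    rw [hv]
    push_cast [Nat.cast_sub (by omega : e ≤ N)]
    rw [ZMod.natCast_self]; ring

end Cyc2

section Cyc3
variable {N : ℕ} [NeZero N] {L : ℕ}

lemma three_points_aux (hN : N = 2*L+1) {x0 z : ZMod N} {d1 : ℕ} (hd1 : 1 ≤ d1) (hd1L : d1 ≤ L)
    (hz0 : z ≠ x0) (hz1 : z ≠ x0 + (d1 : ZMod N)) :
    ∃ (p : ZMod N) (e1 e2 : ℕ), 1 ≤ e1 ∧ e1 ≤ L ∧ 1 ≤ e2 ∧ e2 ≤ L ∧
      ({x0, x0 + (d1 : ZMod N), z} : Finset (ZMod N))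
        = {p, p + (e1 : ZMod N), p + ((e1 + e2 : ℕ) : ZMod N)} := by
  obtain ⟨d, hd, hdL, hcase⟩ := pair_off hN hz0.symm
  rcases hcase with hzc | hxc
  · -- z = x0 + d
    have hdd1 : d ≠ d1 := by
      intro hh; subst hh; exact hz1 hzc
    rcases lt_or_gt_of_ne hdd1 with hlt | hgt
    · refine ⟨x0, d, d1 - d, hd, hdL, by omega, by omega, ?_⟩
      have hcast : (d + (d1 - d) : ℕ) = d1 := by omega
      rw [hcast, hzc]
      rw [Finset.pair_comm (x0 + (d1 : ZMod N)) (x0 + (d : ZMod N))]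
    · refine ⟨x0, d1, d - d1, hd1, hd1L, by omega, by omega, ?_⟩
      have hcast : (d1 + (d - d1) : ℕ) = d := by omega
      rw [hcast, hzc]
  · -- x0 = z + d
    refine ⟨z, d, d1, hd, hdL, hd1, hd1L, ?_⟩
    have h1 : z + (d : ZMod N) = x0 := hxc.symm
    have h2 : z + ((d + d1 : ℕ) : ZMod N) = x0 + (d1 : ZMod N) := by
      push_cast
      rw [← add_assoc, h1]
    rw [h1, h2]
    ext r; simp only [Finset.mem_insert, Finset.mem_singleton]; tauto

lemma three_points (hN : N = 2*L+1) {u v w : ZMod N} (huv : u ≠ v) (huw : u ≠ w) (hvw : v ≠ w) :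
    ∃ (p : ZMod N) (e1 e2 : ℕ), 1 ≤ e1 ∧ e1 ≤ L ∧ 1 ≤ e2 ∧ e2 ≤ L ∧
      ({u, v, w} : Finset (ZMod N)) = {p, p + (e1 : ZMod N), p + ((e1 + e2 : ℕ) : ZMod N)} := by
  obtain ⟨e, he1, heL, hcase⟩ := pair_off hN huv
  rcases hcase with hv | hu
  · obtain ⟨p, e1, e2, h1, h2, h3, h4, hset⟩ :=
      three_points_aux hN he1 heL (Ne.symm huw) (hv ▸ (Ne.symm hvw))
    refine ⟨p, e1, e2, h1, h2, h3, h4, ?_⟩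
    rw [← hset, hv]
  · obtain ⟨p, e1, e2, h1, h2, h3, h4, hset⟩ :=
      three_points_aux hN he1 heL (Ne.symm hvw) (hu ▸ (Ne.symm huw))
    refine ⟨p, e1, e2, h1, h2, h3, h4, ?_⟩
    rw [← hset, ← hu]
    ext r; simp only [Finset.mem_insert, Finset.mem_singleton]; tauto

lemma card_filter_triple {α : Type*} [DecidableEq α] (p : α → Prop) [DecidablePred p]
    {q0 q1 q2 : α} (h01 : q0 ≠ q1) (h02 : q0 ≠ q2) (h12 : q1 ≠ q2) :
    (({q0, q1, q2} : Finset α).filter p).card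
      = (if p q0 then 1 else 0) + (if p q1 then 1 else 0) + (if p q2 then 1 else 0) := by
  rw [Finset.card_filter]
  rw [Finset.sum_insert (by simp [h01, h02]), Finset.sum_insert (by simp [h12]),
    Finset.sum_singleton, ← add_assoc]

end Cyc3

section Main
variable {m n : ℕ} [NeZero m] [NeZero n]

lemma inl_mem_ASeg {i : ZMod m} {c : ℕ} {x : ZMod m} :
    Sum.inl x ∈ ASeg m n i c ↔ x ∈ winS c i := by
  simp [ASeg, winS, eq_comm]

lemma inl_not_mem_BSeg {j : ZMod n} {c : ℕ} {x : ZMod m} :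
    Sum.inl x ∉ BSeg m n j c := by
  simp [BSeg]

lemma inr_mem_BSeg {j : ZMod n} {c : ℕ} {y : ZMod n} :
    Sum.inr y ∈ BSeg m n j c ↔ y ∈ winS c j := by
  simp [BSeg, winS, eq_comm]

lemma inr_not_mem_ASeg {i : ZMod m} {c : ℕ} {y : ZMod n} :
    Sum.inr y ∉ ASeg m n i c := by
  simp [ASeg]

lemma min_cast (c : ℕ) (hc : c ≤ 4) : ((min c (4 - c) : ℕ) : ℚ) = 2 - |(c : ℚ) - 2| := by
  interval_cases c <;> norm_num

end Main

set_option maxHeartbeats 4000000 in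
theorem stmt_12 (m n k : ℕ) [NeZero m] [NeZero n] (hm : Odd m) (hn : Odd n)
    (hmn : ¬(m = 1 ∧ n = 1)) (hk : k ≤ 4)
    (a : Fin k → ZMod m) (ha : Function.Injective a)
    (b : Fin (4-k) → ZMod n) (hb : Function.Injective b)
    (cnt : Finset (ZMod m ⊕ ZMod n) → ℕ)
    (hcnt : ∀ X, cnt X = (Finset.univ.filter (fun t : Fin k => Sum.inl (a t) ∈ X)).card
        + (Finset.univ.filter (fun t' : Fin (4-k) => Sum.inr (b t') ∈ X)).card)
    (S : Finset (ZMod m ⊕ ZMod n) → ℚ)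
    (hS : ∀ X, S X = ((min (cnt X) (4 - cnt X) : ℕ) : ℚ))
    (g : Fin k → ℕ)
    (hg : ∀ t, g t = (Finset.univ.filter (fun s : Fin k =>
        a s ∈ (Finset.Icc 1 ((m-1)/2)).image (fun d : ℕ => a t + (d : ZMod m)))).card)
    (h : Fin (4-k) → ℕ)
    (hh : ∀ t', h t' = (Finset.univ.filter (fun s' : Fin (4-k) =>
        b s' ∈ (Finset.Icc 1 ((n-1)/2)).image (fun d : ℕ => b t' + (d : ZMod n)))).card)
    (V : ℚ)
    (hV : V = (∑ i : ZMod m, ∑ j : ZMod n, S (ASeg m n i ((m+1)/2) ∪ BSeg m n j ((n-1)/2)))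
      - ((∑ i : ZMod m, ∑ j : ZMod n, S (ASeg m n i ((m-1)/2) ∪ BSeg m n j ((n-1)/2)))
        + S (Finset.univ.image Sum.inl))) :
    (V = 0 ∨ V = 2) ∧
    (V = 2 ↔ ((k = 3 ∧ ∀ t, g t = 1) ∨ (k = 1 ∧ ∀ t', h t' = 1))) := by
  classical
  obtain ⟨L, hm'⟩ := hm
  obtain ⟨L', hn'⟩ := hn
  have hmL : (m-1)/2 = L := by omega
  have hmL1 : (m+1)/2 = L+1 := by omega
  have hnL : (n-1)/2 = L' := by omega
  set A : ℕ → ZMod m → ℕ := fun c i => (Finset.univ.filter fun t : Fin k => a t ∈ winS c i).card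
    with hA
  set B : ZMod n → ℕ := fun j => (Finset.univ.filter fun t' : Fin (4-k) => b t' ∈ winS L' j).card
    with hB
  have hAk : ∀ c i, A c i ≤ k := fun c i => by
    simpa using Finset.card_filter_le (Finset.univ : Finset (Fin k)) _
  have hBk : ∀ j, B j ≤ 4 - k := fun j => by
    simpa using Finset.card_filter_le (Finset.univ : Finset (Fin (4-k))) _
  -- counting split
  have hcnt2 : ∀ (c : ℕ) (i : ZMod m) (j : ZMod n),
      cnt (ASeg m n i c ∪ BSeg m n j L') = A c i + B j := by
    intro c i j
    rw [hcnt]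
    congr 1
    · apply congrArg
      apply Finset.filter_congr
      intro t _
      simp [Finset.mem_union, inl_mem_ASeg, inl_not_mem_BSeg]
    · apply congrArg
      apply Finset.filter_congr
      intro t' _
      simp [Finset.mem_union, inr_mem_BSeg, inr_not_mem_ASeg]
  have hScnt : ∀ (c : ℕ) (i : ZMod m) (j : ZMod n),
      S (ASeg m n i c ∪ BSeg m n j L') = 2 - |((A c i : ℚ) + (B j : ℚ)) - 2| := by
    intro c i j
    rw [hS, hcnt2]
    have hle : A c i + B j ≤ 4 := by have := hAk c i; have := hBk j; omega
    rw [min_cast _ hle]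
    push_cast
    ring_nf
  have hSA : S (Finset.univ.image Sum.inl) = 2 - |(k : ℚ) - 2| := by
    rw [hS]
    have h1 : cnt (Finset.univ.image Sum.inl) = k := by
      rw [hcnt]
      have e1 : (Finset.univ.filter (fun t : Fin k =>
          Sum.inl (a t) ∈ (Finset.univ.image Sum.inl : Finset (ZMod m ⊕ ZMod n)))) = Finset.univ := by
        apply Finset.filter_true_of_mem
        intro t _
        exact Finset.mem_image_of_mem _ (Finset.mem_univ _)
      have e2 : (Finset.univ.filter (fun t' : Fin (4-k) =>
          Sum.inr (b t') ∈ (Finset.univ.image (Sum.inl : ZMod m → ZMod m ⊕ ZMod n)))) = ∅ := by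
        apply Finset.filter_false_of_mem
        intro t' _
        simp
      rw [e1, e2]
      simp
    rw [h1, min_cast k hk]
  have hV2 : V = (∑ i : ZMod m, ∑ j : ZMod n,
      (|(A L i : ℚ) + (B j : ℚ) - 2| - |(A (L+1) i : ℚ) + (B j : ℚ) - 2|)) - (2 - |(k:ℚ) - 2|) := by
    rw [hV, hSA, hmL, hmL1, hnL]
    rw [Finset.sum_congr rfl (fun i _ => Finset.sum_congr rfl (fun j _ => hScnt (L+1) i j))]
    rw [Finset.sum_congr rfl (fun i _ => Finset.sum_congr rfl (fun j _ => hScnt L i j))]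
    rw [show ∀ p q c : ℚ, p - (q + c) = (p - q) - c from fun p q c => by ring]
    congr 1
    rw [← Finset.sum_sub_distrib]
    refine Finset.sum_congr rfl (fun i _ => ?_)
    rw [← Finset.sum_sub_distrib]
    refine Finset.sum_congr rfl (fun j _ => ?_)
    ring
  -- telescope in i
  have hLm : L < m := by omega
  have hins : ∀ i : ZMod m, A (L+1) i
      = A L i + (Finset.univ.filter fun t : Fin k => a t = i + ((L : ℕ) : ZMod m)).card := by
    intro i
    have hsplit : ∀ t : Fin k, a t ∈ winS (L+1) i ↔ (a t ∈ winS L i ∨ a t = i + ((L:ℕ) : ZMod m)) := by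
      intro t
      rw [mem_winS, mem_winS]
      constructor
      · rintro ⟨d, hd, had⟩
        rcases Nat.lt_succ_iff_lt_or_eq.mp hd with h' | h'
        · exact Or.inl ⟨d, h', had⟩
        · right; rw [had, h']
      · rintro (⟨d, hd, had⟩ | hq)
        · exact ⟨d, by omega, had⟩
        · exact ⟨L, by omega, hq⟩
    rw [hA]
    simp only
    rw [Finset.filter_congr (fun t _ => hsplit t), Finset.filter_or]
    rw [Finset.card_union_of_disjoint]
    rw [Finset.disjoint_filter]
    intro t _ hw heq
    rw [heq] at hw
    have := (mem_winS_off (by omega : L ≤ m) (by omega : L < m) rfl).mp hw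
    omega
  have hone : ∀ t : Fin k,
      (Finset.univ.filter fun s : Fin k => a s = (a t - ((L:ℕ) : ZMod m)) + ((L:ℕ) : ZMod m)).card = 1 := by
    intro t
    have heq : a t - ((L:ℕ) : ZMod m) + ((L:ℕ) : ZMod m) = a t := by ring
    rw [Finset.filter_congr (fun s _ => by rw [heq])]
    have : (Finset.univ.filter fun s : Fin k => a s = a t) = {t} := by
      ext s
      simp [ha.eq_iff]
    rw [this, Finset.card_singleton]
  have htel : (∑ i : ZMod m, ∑ j : ZMod n,
      (|(A L i : ℚ) + (B j : ℚ) - 2| - |(A (L+1) i : ℚ) + (B j : ℚ) - 2|))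
      = ∑ t : Fin k, ∑ j : ZMod n,
        (|(A L (a t - ((L:ℕ) : ZMod m)) : ℚ) + (B j : ℚ) - 2|
          - |(A L (a t - ((L:ℕ) : ZMod m)) : ℚ) + 1 + (B j : ℚ) - 2|) := by
    have hzF : ∀ i : ZMod m, i ∉ (Finset.univ.image fun t : Fin k => a t - ((L:ℕ):ZMod m)) →
        (∑ j : ZMod n, (|(A L i : ℚ) + (B j : ℚ) - 2| - |(A (L+1) i : ℚ) + (B j : ℚ) - 2|)) = 0 := by
      intro i hni
      have hz : (Finset.univ.filter fun t : Fin k => a t = i + ((L:ℕ) : ZMod m)).card = 0 := by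
        rw [Finset.card_eq_zero, Finset.filter_eq_empty_iff]
        intro t _ heq
        apply hni
        rw [Finset.mem_image]
        exact ⟨t, Finset.mem_univ t, by rw [heq]; ring⟩
      apply Finset.sum_eq_zero
      intro j _
      rw [hins, hz, Nat.add_zero, sub_self]
    calc (∑ i : ZMod m, ∑ j : ZMod n,
        (|(A L i : ℚ) + (B j : ℚ) - 2| - |(A (L+1) i : ℚ) + (B j : ℚ) - 2|))
        = ∑ i ∈ (Finset.univ.image fun t : Fin k => a t - ((L:ℕ):ZMod m)), ∑ j : ZMod n,
          (|(A L i : ℚ) + (B j : ℚ) - 2| - |(A (L+1) i : ℚ) + (B j : ℚ) - 2|) :=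
        (Finset.sum_subset (Finset.subset_univ _) (fun i _ hni => hzF i hni)).symm
      _ = ∑ t : Fin k, ∑ j : ZMod n,
          (|(A L (a t - ((L:ℕ):ZMod m)) : ℚ) + (B j : ℚ) - 2|
            - |(A (L+1) (a t - ((L:ℕ):ZMod m)) : ℚ) + (B j : ℚ) - 2|) := by
          refine Finset.sum_image ?_
          intro t _ t' _ hq
          have h2 : a t = a t' := by
            have h3 := congrArg (· + ((L:ℕ) : ZMod m)) hq
            simpa using h3
          exact ha h2
      _ = ∑ t : Fin k, ∑ j : ZMod n,
          (|(A L (a t - ((L:ℕ) : ZMod m)) : ℚ) + (B j : ℚ) - 2|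
            - |(A L (a t - ((L:ℕ) : ZMod m)) : ℚ) + 1 + (B j : ℚ) - 2|) := by
          refine Finset.sum_congr rfl (fun t _ => Finset.sum_congr rfl (fun j _ => ?_))
          rw [hins, hone]
          push_cast
          ring_nf
  -- A value at the telescope point
  have hAg : ∀ t : Fin k, A L (a t - ((L:ℕ) : ZMod m)) + g t = k - 1 := by
    intro t
    have hmem : ∀ s : Fin k, (a s ∈ winS L (a t - ((L:ℕ) : ZMod m))) ↔ a t ∈ rh L (a s) := by
      intro s
      rw [mem_winS]
      constructor
      · rintro ⟨d, hd, hsd⟩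
        have h4 : a t = a s + ((L - d : ℕ) : ZMod m) := by
          rw [hsd]
          push_cast [Nat.cast_sub (le_of_lt hd)]
          ring
        rw [h4]
        exact Finset.mem_image.mpr ⟨L - d, Finset.mem_Icc.mpr ⟨by omega, by omega⟩, rfl⟩
      · intro hmm
        obtain ⟨e, he, hse⟩ := Finset.mem_image.mp hmm
        rw [Finset.mem_Icc] at he
        refine ⟨L - e, by omega, ?_⟩
        rw [← hse]
        push_cast [Nat.cast_sub he.2]
        ring
    have hA1 : A L (a t - ((L:ℕ):ZMod m))
        = (Finset.univ.filter fun s : Fin k => a t ∈ rh L (a s)).card := by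
      rw [hA]
      exact congrArg Finset.card (Finset.filter_congr fun s _ => hmem s)
    have hg1 : g t = (Finset.univ.filter fun s : Fin k => a s ∈ rh L (a t)).card := by
      rw [hg t, hmL]; rfl
    rw [hA1, hg1]
    rw [Finset.card_filter, Finset.card_filter, ← Finset.sum_add_distrib]
    have key : ∀ s : Fin k, ((if a t ∈ rh L (a s) then 1 else 0)
        + (if a s ∈ rh L (a t) then 1 else 0) : ℕ) = if s = t then 0 else 1 := by
      intro s
      by_cases hst : s = t
      · subst hst; simp [not_self_mem_rh hLm]
      · have hne : a t ≠ a s := fun hc => hst (ha hc).symm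
        have hiff := exactly_one hm' hne
        by_cases h1 : a s ∈ rh L (a t)
        · simp [h1, hiff.mp h1, hst]
        · have h2 : a t ∈ rh L (a s) := by by_contra hc; exact h1 (hiff.mpr hc)
          simp [h1, h2, hst]
    rw [Finset.sum_congr rfl (fun s _ => key s)]
    have h1 : (∑ s : Fin k, (if s = t then (1:ℕ) else 0)) = 1 := by simp
    have h2 : (∑ s : Fin k, ((if s = t then (0:ℕ) else 1) + (if s = t then 1 else 0))) = k := by
      have hone' : ∀ s : Fin k, ((if s = t then (0:ℕ) else 1) + (if s = t then 1 else 0)) = 1 :=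
        fun s => by by_cases hs : s = t <;> simp [hs]
      rw [Finset.sum_congr rfl (fun s _ => hone' s)]
      simp
    rw [Finset.sum_add_distrib, h1] at h2
    omega
  have hV3 := hV2
  rw [htel] at hV3
  have hgrh : ∀ t, g t = (Finset.univ.filter fun s : Fin k => a s ∈ rh L (a t)).card :=
    fun t => by rw [hg t, hmL]; rfl
  have hgsum : 2 * (∑ t, g t) = k * (k-1) := by
    rw [Finset.sum_congr rfl (fun t _ => hgrh t)]
    exact sum_gamma hm' a ha
  have hgle : ∀ t, g t ≤ k - 1 := fun t => by rw [hgrh t]; exact gamma_le hm' a t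
  have hhrh : ∀ t', h t' = (Finset.univ.filter fun s' : Fin (4-k) => b s' ∈ rh L' (b t')).card :=
    fun t' => by rw [hh t', hnL]; rfl
  have hhsum : 2 * (∑ t', h t') = (4-k) * (4-k-1) := by
    rw [Finset.sum_congr rfl (fun t' _ => hhrh t')]
    exact sum_gamma hn' b hb
  have hhle : ∀ t', h t' ≤ 4-k-1 := fun t' => by rw [hhrh t']; exact gamma_le hn' b t'
  have hsB : ∀ q : ZMod n, (∑ j : ZMod n, (if q ∈ winS L' j then (1:ℚ) else 0)) = (L' : ℚ) := by
    intro q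
    rw [Finset.sum_boole]
    exact_mod_cast congrArg (Nat.cast : ℕ → ℚ) (card_win q (show L' ≤ n by omega))
  have hnQ : ((n:ℚ)) = 2*(L':ℚ)+1 := by exact_mod_cast congrArg (Nat.cast : ℕ → ℚ) hn'
  have hcardZn : (Finset.univ : Finset (ZMod n)).card = n := by
    rw [Finset.card_univ, ZMod.card]
  clear_value A B
  clear hcnt hS hV hcnt2 hScnt hSA htel hins hone
  have hk5 : k = 0 ∨ k = 1 ∨ k = 2 ∨ k = 3 ∨ k = 4 := by omega
  rcases hk5 with rfl | rfl | rfl | rfl | rfl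
  · -- k = 0
    have hV0 : V = 0 := by
      rw [hV3]
      simp
    refine ⟨Or.inl hV0, ?_⟩
    rw [hV0]
    constructor
    · intro h2; norm_num at h2
    · rintro (⟨h3, _⟩ | ⟨h3, _⟩) <;> norm_num at h3
  · -- k = 1
    have hLn : L' < n := by omega
    have hb01 : b 0 ≠ b 1 := hb.ne (show (0 : Fin (4-1)) ≠ 1 by decide)
    have hb02 : b 0 ≠ b 2 := hb.ne (show (0 : Fin (4-1)) ≠ 2 by decide)
    have hb12 : b 1 ≠ b 2 := hb.ne (show (1 : Fin (4-1)) ≠ 2 by decide)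
    obtain ⟨p, e1, e2, he1a, he1b, he2a, he2b, hset⟩ := three_points hn' hb01 hb02 hb12
    set q1 := p + ((e1 : ℕ) : ZMod n) with hq1def
    set q2 := p + ((e1 + e2 : ℕ) : ZMod n) with hq2def
    have hEn : e1 + e2 < n := by omega
    have hq01 : p ≠ q1 := by
      intro hc
      have h5 : ((e1 : ℕ) : ZMod n) = ((0:ℕ) : ZMod n) := by
        rw [hq1def] at hc
        push_cast
        exact (left_eq_add.mp hc)
      have := natCast_inj' (show e1 < n by omega) (show 0 < n by omega) h5
      omega
    have hq02 : p ≠ q2 := by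
      intro hc
      have h5 : ((e1 + e2 : ℕ) : ZMod n) = ((0:ℕ) : ZMod n) := by
        rw [hq2def] at hc
        push_cast
        push_cast at hc
        linear_combination -hc
      have := natCast_inj' hEn (show 0 < n by omega) h5
      omega
    have hq12 : q1 ≠ q2 := by
      intro hc
      rw [hq1def, hq2def] at hc
      have h5 : ((e1 : ℕ) : ZMod n) = ((e1 + e2 : ℕ) : ZMod n) := add_left_cancel hc
      have := natCast_inj' (show e1 < n by omega) hEn h5
      omega
    have himg : (Finset.univ.image b) = ({b 0, b 1, b 2} : Finset (ZMod n)) := by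
      ext y
      simp only [Finset.mem_image, Finset.mem_univ, true_and, Finset.mem_insert,
        Finset.mem_singleton]
      constructor
      · rintro ⟨t', rfl⟩
        rcases (show t' = 0 ∨ t' = 1 ∨ t' = 2 by revert t'; decide) with rfl | rfl | rfl <;> tauto
      · rintro (rfl | rfl | rfl)
        exacts [⟨0, rfl⟩, ⟨1, rfl⟩, ⟨2, rfl⟩]
    have himgcard : ∀ (R : Finset (ZMod n)),
        (Finset.univ.filter fun s' : Fin (4-1) => b s' ∈ R).card
        = (if p ∈ R then 1 else 0) + (if q1 ∈ R then 1 else 0) + (if q2 ∈ R then 1 else 0) := by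
      intro R
      have h5 : (Finset.univ.filter fun s' : Fin (4-1) => b s' ∈ R).card
          = (({p, q1, q2} : Finset (ZMod n)).filter (fun y => y ∈ R)).card := by
        rw [← hset, ← himg, Finset.filter_image, Finset.card_image_of_injective _ hb]
      rw [h5, card_filter_triple _ hq01 hq02 hq12]
    have hBtriple : ∀ j, B j = (if p ∈ winS L' j then 1 else 0)
        + (if q1 ∈ winS L' j then 1 else 0) + (if q2 ∈ winS L' j then 1 else 0) := by
      intro j
      rw [hB]
      exact himgcard (winS L' j)
    have hA00 : A L (a 0 - ((L:ℕ) : ZMod m)) = 0 := by have := hAg 0; omega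
    -- pointwise identity
    have hptw : ∀ j : ZMod n,
        (|(A L (a 0 - ((L:ℕ) : ZMod m)) : ℚ) + (B j : ℚ) - 2|
          - |(A L (a 0 - ((L:ℕ) : ZMod m)) : ℚ) + 1 + (B j : ℚ) - 2|)
        = 1 - 2 * ((if p ∈ winS L' j ∧ q1 ∈ winS L' j then (1:ℚ) else 0)
            + (if p ∈ winS L' j ∧ q2 ∈ winS L' j then (1:ℚ) else 0)
            + (if q1 ∈ winS L' j ∧ q2 ∈ winS L' j then (1:ℚ) else 0))
          + 4 * (if p ∈ winS L' j ∧ q1 ∈ winS L' j ∧ q2 ∈ winS L' j then (1:ℚ) else 0) := by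
      intro j
      rw [hA00]
      have hBq : ((B j : ℚ)) = (if p ∈ winS L' j then (1:ℚ) else 0)
          + (if q1 ∈ winS L' j then (1:ℚ) else 0) + (if q2 ∈ winS L' j then (1:ℚ) else 0) := by
        rw [hBtriple j]; push_cast; rfl
      rw [hBq]
      by_cases h0 : p ∈ winS L' j <;> by_cases h1' : q1 ∈ winS L' j <;>
        by_cases h2' : q2 ∈ winS L' j <;> simp [h0, h1', h2'] <;> norm_num
    have hO01 : (Finset.univ.filter fun j : ZMod n => p ∈ winS L' j ∧ q1 ∈ winS L' j).card
        = L' - e1 := card_win2 hn' he1a he1b hq1def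
    have hO12 : (Finset.univ.filter fun j : ZMod n => q1 ∈ winS L' j ∧ q2 ∈ winS L' j).card
        = L' - e2 := by
      refine card_win2 hn' he2a he2b ?_
      rw [hq1def, hq2def]
      push_cast
      ring
    have hsumB : ∀ (P : ZMod n → Prop) (_ : DecidablePred P),
        (∑ j : ZMod n, (if P j then (1:ℚ) else 0)) = ((Finset.univ.filter P).card : ℚ) := by
      intro P hP
      rw [Finset.sum_boole]
    -- the main j-sum, case split
    by_cases hE : e1 + e2 ≤ L'
    · -- linear case : V = 0 and some h-value is 2
      have hO02 : (Finset.univ.filter fun j : ZMod n => p ∈ winS L' j ∧ q2 ∈ winS L' j).card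
          = L' - (e1 + e2) := card_win2 hn' (by omega) hE hq2def
      have hT : (Finset.univ.filter fun j : ZMod n =>
          p ∈ winS L' j ∧ q1 ∈ winS L' j ∧ q2 ∈ winS L' j).card = L' - (e1 + e2) := by
        rw [hq1def, hq2def, filter_win3_linear hn' he1a he2a hE]
        rw [← hq2def]
        exact card_win2 hn' (by omega) hE hq2def
      have hmain : (∑ j : ZMod n,
          (|(A L (a 0 - ((L:ℕ) : ZMod m)) : ℚ) + (B j : ℚ) - 2|
            - |(A L (a 0 - ((L:ℕ) : ZMod m)) : ℚ) + 1 + (B j : ℚ) - 2|)) = 1 := by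
        rw [Finset.sum_congr rfl (fun j _ => hptw j)]
        rw [Finset.sum_add_distrib, Finset.sum_sub_distrib, Finset.sum_const, hcardZn,
          nsmul_eq_mul, mul_one, ← Finset.mul_sum, ← Finset.mul_sum,
          Finset.sum_add_distrib, Finset.sum_add_distrib]
        rw [hsumB _ _, hsumB _ _, hsumB _ _, hsumB _ _]
        rw [hO01, hO12, hO02, hT]
        push_cast [Nat.cast_sub (show e1 ≤ L' from he1b), Nat.cast_sub (show e2 ≤ L' from he2b),
          Nat.cast_sub hE]
        linarith [hnQ]
      rw [Fin.sum_univ_one, hmain] at hV3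
      have hV0 : V = 0 := by rw [hV3]; norm_num
      -- find member equal to p, with h-value 2
      have hpmem : p ∈ ({b 0, b 1, b 2} : Finset (ZMod n)) := by
        rw [hset]; exact Finset.mem_insert_self _ _
      have hq1mem : q1 ∈ rh L' p := (mem_rh_off hLn (show e1 < n by omega) hq1def).mpr
        ⟨he1a, he1b⟩
      have hq2mem : q2 ∈ rh L' p := (mem_rh_off hLn hEn hq2def).mpr ⟨by omega, hE⟩
      simp only [Finset.mem_insert, Finset.mem_singleton] at hpmem
      have hbad : ∃ t' : Fin (4-1), h t' = 2 := by
        have hval : ∀ t' : Fin (4-1), b t' = p → h t' = 2 := by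
          intro t' hbt
          rw [hhrh t', hbt, himgcard (rh L' p)]
          rw [if_neg (not_self_mem_rh hLn p), if_pos hq1mem, if_pos hq2mem]
        rcases hpmem with hc | hc | hc
        exacts [⟨0, hval 0 hc.symm⟩, ⟨1, hval 1 hc.symm⟩, ⟨2, hval 2 hc.symm⟩]
      refine ⟨Or.inl hV0, ?_⟩
      rw [hV0]
      constructor
      · intro hcc; norm_num at hcc
      · rintro (⟨hcc, _⟩ | ⟨_, hall⟩)
        · norm_num at hcc
        · obtain ⟨t', ht'⟩ := hbad
          have := hall t'
          omega
    · -- cyclic case : V = 2 and all h-values are 1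
      push_neg at hE
      have he3a : 1 ≤ n - (e1 + e2) := by omega
      have he3b : n - (e1 + e2) ≤ L' := by omega
      have hq20 : p = q2 + ((n - (e1 + e2) : ℕ) : ZMod n) := by
        rw [hq2def]
        push_cast [Nat.cast_sub (le_of_lt hEn)]
        rw [ZMod.natCast_self]
        ring
      have hO02 : (Finset.univ.filter fun j : ZMod n => p ∈ winS L' j ∧ q2 ∈ winS L' j).card
          = L' - (n - (e1 + e2)) := by
        rw [Finset.filter_congr (fun j _ => and_comm)]
        exact card_win2 hn' he3a he3b hq20
      have hT : (Finset.univ.filter fun j : ZMod n =>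
          p ∈ winS L' j ∧ q1 ∈ winS L' j ∧ q2 ∈ winS L' j).card = 0 := by
        rw [hq1def, hq2def, card_win3_zero hn' he1a he1b he2a he2b hE, Finset.card_empty]
      have hmain : (∑ j : ZMod n,
          (|(A L (a 0 - ((L:ℕ) : ZMod m)) : ℚ) + (B j : ℚ) - 2|
            - |(A L (a 0 - ((L:ℕ) : ZMod m)) : ℚ) + 1 + (B j : ℚ) - 2|)) = 3 := by
        rw [Finset.sum_congr rfl (fun j _ => hptw j)]
        rw [Finset.sum_add_distrib, Finset.sum_sub_distrib, Finset.sum_const, hcardZn,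
          nsmul_eq_mul, mul_one, ← Finset.mul_sum, ← Finset.mul_sum,
          Finset.sum_add_distrib, Finset.sum_add_distrib]
        rw [hsumB _ _, hsumB _ _, hsumB _ _, hsumB _ _]
        rw [hO01, hO12, hO02, hT]
        push_cast [Nat.cast_sub (show e1 ≤ L' from he1b), Nat.cast_sub (show e2 ≤ L' from he2b),
          Nat.cast_sub he3b, Nat.cast_sub (le_of_lt hEn)]
        linarith [hnQ]
      rw [Fin.sum_univ_one, hmain] at hV3
      have hV2' : V = 2 := by rw [hV3]; norm_num
      -- all h-values are 1
      have hq1p : q1 ∈ rh L' p := (mem_rh_off hLn (show e1 < n by omega) hq1def).mpr ⟨he1a, he1b⟩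
      have hq2p : q2 ∉ rh L' p := by
        rw [mem_rh_off hLn hEn hq2def]
        omega
      have hq0q1 : p ∉ rh L' q1 := by
        have hpq1 : p = q1 + ((n - e1 : ℕ) : ZMod n) := by
          rw [hq1def]
          push_cast [Nat.cast_sub (show e1 ≤ n by omega)]
          rw [ZMod.natCast_self]
          ring
        rw [mem_rh_off hLn (show n - e1 < n by omega) hpq1]
        omega
      have hq2q1 : q2 ∈ rh L' q1 := by
        have hq21 : q2 = q1 + ((e2 : ℕ) : ZMod n) := by
          rw [hq1def, hq2def]; push_cast; ring
        rw [mem_rh_off hLn (show e2 < n by omega) hq21]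
        omega
      have hq0q2 : p ∈ rh L' q2 := by
        rw [mem_rh_off hLn (show n - (e1+e2) < n by omega) hq20]
        omega
      have hq1q2 : q1 ∉ rh L' q2 := by
        have hq12' : q1 = q2 + ((n - e2 : ℕ) : ZMod n) := by
          rw [hq1def, hq2def]
          push_cast [Nat.cast_sub (show e2 ≤ n by omega)]
          rw [ZMod.natCast_self]
          ring
        rw [mem_rh_off hLn (show n - e2 < n by omega) hq12']
        omega
      have hall : ∀ t' : Fin (4-1), h t' = 1 := by
        intro t'
        have hmem : b t' ∈ ({b 0, b 1, b 2} : Finset (ZMod n)) := by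
          rcases (show t' = 0 ∨ t' = 1 ∨ t' = 2 by revert t'; decide) with rfl | rfl | rfl <;>
            simp
        rw [hset] at hmem
        simp only [Finset.mem_insert, Finset.mem_singleton] at hmem
        rw [hhrh t', himgcard (rh L' (b t'))]
        rcases hmem with hc | hc | hc <;> rw [hc]
        · rw [if_neg (not_self_mem_rh hLn p), if_pos hq1p, if_neg hq2p]
        · rw [if_neg hq0q1, if_neg (not_self_mem_rh hLn q1), if_pos hq2q1]
        · rw [if_pos hq0q2, if_neg hq1q2, if_neg (not_self_mem_rh hLn q2)]
      refine ⟨Or.inr hV2', ?_⟩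
      rw [hV2']
      constructor
      · intro _
        exact Or.inr ⟨rfl, hall⟩
      · intro _; rfl
  · -- k = 2
    have hne01 : b 0 ≠ b 1 := hb.ne (show (0 : Fin (4-2)) ≠ 1 by decide)
    have hBj : ∀ j, B j = (if b 0 ∈ winS L' j then 1 else 0)
        + (if b 1 ∈ winS L' j then 1 else 0) := by
      intro j
      rw [hB]
      simp only
      rw [show (Finset.univ : Finset (Fin (4-2))) = {0, 1} by decide]
      rw [Finset.filter_insert, Finset.filter_singleton]
      by_cases h0 : b 0 ∈ winS L' j <;> by_cases h1' : b 1 ∈ winS L' j <;>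
        simp [h0, h1']
    have hg01 : g 0 + g 1 = 1 := by
      have := hgsum
      rw [Fin.sum_univ_two] at this
      omega
    have hA0 := hAg 0
    have hA1 := hAg 1
    have hmain : (∑ t : Fin 2, ∑ j : ZMod n,
        (|(A L (a t - ((L:ℕ) : ZMod m)) : ℚ) + (B j : ℚ) - 2|
          - |(A L (a t - ((L:ℕ) : ZMod m)) : ℚ) + 1 + (B j : ℚ) - 2|)) = 2 := by
      rw [Fin.sum_univ_two, ← Finset.sum_add_distrib]
      have hptw : ∀ j : ZMod n,
          ((|(A L (a 0 - ((L:ℕ) : ZMod m)) : ℚ) + (B j : ℚ) - 2|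
            - |(A L (a 0 - ((L:ℕ) : ZMod m)) : ℚ) + 1 + (B j : ℚ) - 2|)
          + (|(A L (a 1 - ((L:ℕ) : ZMod m)) : ℚ) + (B j : ℚ) - 2|
            - |(A L (a 1 - ((L:ℕ) : ZMod m)) : ℚ) + 1 + (B j : ℚ) - 2|))
          = 2 - 2 * ((if b 0 ∈ winS L' j then (1:ℚ) else 0)
            + (if b 1 ∈ winS L' j then (1:ℚ) else 0)) := by
        intro j
        have hc01 : (A L (a 0 - ((L:ℕ) : ZMod m)) = 1 ∧ A L (a 1 - ((L:ℕ) : ZMod m)) = 0)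
            ∨ (A L (a 0 - ((L:ℕ) : ZMod m)) = 0 ∧ A L (a 1 - ((L:ℕ) : ZMod m)) = 1) := by omega
        have hBjc : ((B j : ℚ)) = (if b 0 ∈ winS L' j then (1:ℚ) else 0)
            + (if b 1 ∈ winS L' j then (1:ℚ) else 0) := by
          rw [hBj j]
          push_cast
          rfl
        rw [hBjc]
        rcases hc01 with ⟨hc0, hc1⟩ | ⟨hc0, hc1⟩ <;> rw [hc0, hc1] <;>
          by_cases h0 : b 0 ∈ winS L' j <;> by_cases h1' : b 1 ∈ winS L' j <;>
          simp [h0, h1'] <;> norm_num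
      rw [Finset.sum_congr rfl (fun j _ => hptw j)]
      rw [Finset.sum_sub_distrib, Finset.sum_const, hcardZn, nsmul_eq_mul, ← Finset.mul_sum]
      rw [Finset.sum_add_distrib, hsB (b 0), hsB (b 1)]
      linarith [hnQ]
    have hV0 : V = 0 := by
      rw [hV3, hmain]
      norm_num
    refine ⟨Or.inl hV0, ?_⟩
    rw [hV0]
    constructor
    · intro h2; norm_num at h2
    · rintro (⟨h3, _⟩ | ⟨h3, _⟩) <;> norm_num at h3
  · -- k = 3
    have hBj1 : ∀ j, B j = (if b 0 ∈ winS L' j then 1 else 0) := by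
      intro j
      rw [hB]
      simp only
      rw [show (Finset.univ : Finset (Fin (4-3))) = {0} by decide]
      rw [Finset.filter_singleton]
      by_cases h0 : b 0 ∈ winS L' j <;> simp [h0]
    have hterm : ∀ (c : ℕ), c ≤ 2 →
        (∑ j : ZMod n, (|(c : ℚ) + (B j : ℚ) - 2| - |(c : ℚ) + 1 + (B j : ℚ) - 2|))
        = (if c = 0 then (n:ℚ) else if c = 1 then 1 else -(n:ℚ)) := by
      intro c hc
      have hBjc : ∀ j, ((B j : ℚ)) = (if b 0 ∈ winS L' j then (1:ℚ) else 0) := by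
        intro j; rw [hBj1 j]; push_cast; rfl
      interval_cases c
      · have hp : ∀ j : ZMod n, (|((0:ℕ) : ℚ) + (B j : ℚ) - 2| - |((0:ℕ) : ℚ) + 1 + (B j : ℚ) - 2|)
            = 1 := by
          intro j; rw [hBjc j]; by_cases hj : b 0 ∈ winS L' j <;> simp [hj] <;> norm_num
        rw [Finset.sum_congr rfl (fun j _ => hp j), Finset.sum_const, hcardZn, nsmul_eq_mul,
          mul_one]
        norm_num
      · have hp : ∀ j : ZMod n, (|((1:ℕ) : ℚ) + (B j : ℚ) - 2| - |((1:ℕ) : ℚ) + 1 + (B j : ℚ) - 2|)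
            = 1 - 2 * (if b 0 ∈ winS L' j then (1:ℚ) else 0) := by
          intro j; rw [hBjc j]; by_cases hj : b 0 ∈ winS L' j <;> simp [hj] <;> norm_num
        rw [Finset.sum_congr rfl (fun j _ => hp j)]
        rw [Finset.sum_sub_distrib, Finset.sum_const, hcardZn, nsmul_eq_mul, mul_one,
          ← Finset.mul_sum, hsB (b 0)]
        norm_num
        linarith [hnQ]
      · have hp : ∀ j : ZMod n, (|((2:ℕ) : ℚ) + (B j : ℚ) - 2| - |((2:ℕ) : ℚ) + 1 + (B j : ℚ) - 2|)
            = -1 := by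
          intro j; rw [hBjc j]; by_cases hj : b 0 ∈ winS L' j <;> simp [hj] <;> norm_num
        rw [Finset.sum_congr rfl (fun j _ => hp j), Finset.sum_const, hcardZn, nsmul_eq_mul]
        norm_num
    have htermg : ∀ t : Fin 3, (∑ j : ZMod n,
        (|(A L (a t - ((L:ℕ) : ZMod m)) : ℚ) + (B j : ℚ) - 2|
          - |(A L (a t - ((L:ℕ) : ZMod m)) : ℚ) + 1 + (B j : ℚ) - 2|))
        = (if g t = 2 then (n:ℚ) else if g t = 1 then 1 else -(n:ℚ)) := by
      intro t
      have hc := hAg t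
      have hgle' := hgle t
      have hAval : A L (a t - ((L:ℕ) : ZMod m)) = 2 - g t := by omega
      rw [hAval]
      rw [hterm (2 - g t) (by omega)]
      have : g t = 0 ∨ g t = 1 ∨ g t = 2 := by omega
      rcases this with h' | h' | h' <;> rw [h'] <;> norm_num
    have hVval : V = ((if g 0 = 2 then (n:ℚ) else if g 0 = 1 then 1 else -(n:ℚ))
        + (if g 1 = 2 then (n:ℚ) else if g 1 = 1 then 1 else -(n:ℚ))
        + (if g 2 = 2 then (n:ℚ) else if g 2 = 1 then 1 else -(n:ℚ))) - 1 := by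
      rw [hV3, Fin.sum_univ_three, htermg 0, htermg 1, htermg 2]
      norm_num
    have hsum3 : g 0 + g 1 + g 2 = 3 := by
      have := hgsum
      rw [Fin.sum_univ_three] at this
      omega
    have hb0 := hgle 0
    have hb1 := hgle 1
    have hb2 := hgle 2
    set x0 := g 0 with hx0
    set x1 := g 1 with hx1
    set x2 := g 2 with hx2
    interval_cases x0 <;> interval_cases x1 <;> interval_cases x2 <;>
      first
      | omega
      | (have hV0 : V = 0 := by rw [hVval]; norm_num
         refine ⟨Or.inl hV0, ?_⟩
         rw [hV0]
         constructor
         · intro hcc; norm_num at hcc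
         · rintro (⟨_, hallg⟩ | ⟨hcc, _⟩)
           · have e0 := hallg 0; have e1 := hallg 1; have e2 := hallg 2; omega
           · norm_num at hcc)
      | (have hV2' : V = 2 := by rw [hVval]; norm_num
         refine ⟨Or.inr hV2', ?_⟩
         rw [hV2']
         constructor
         · intro _
           refine Or.inl ⟨rfl, ?_⟩
           intro t
           rcases (show t = 0 ∨ t = 1 ∨ t = 2 by revert t; decide) with rfl | rfl | rfl <;> omega
         · intro _; rfl)
  · -- k = 4
    have hB0 : ∀ j, B j = 0 := by
      intro j
      rw [hB]
      simp only [Finset.card_eq_zero, Finset.filter_eq_empty_iff]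
      intro t' _
      exact t'.elim0
    have hcomp : ∀ i : ZMod m, A (L+1) i + A L (i + ((L+1 : ℕ) : ZMod m)) = 4 := by
      intro i
      have hpt : ∀ t : Fin 4, (a t ∈ winS L (i + ((L+1 : ℕ) : ZMod m))) ↔ ¬ (a t ∈ winS (L+1) i) := by
        intro t
        set e := (a t - i).val with he
        have hlt : e < m := ZMod.val_lt _
        have hae : a t = i + (e : ZMod m) := by
          rw [he, ZMod.natCast_val, ZMod.cast_id]; ring
        have h1 : (a t ∈ winS (L+1) i) ↔ e < L + 1 :=
          mem_winS_off (by omega) hlt hae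
        by_cases hcase : e ≤ L
        · rw [h1]
          constructor
          · intro hmm
            rw [mem_winS] at hmm
            obtain ⟨d, hd, had⟩ := hmm
            have h5 : a t = i + ((L + 1 + d : ℕ) : ZMod m) := by
              rw [had]; push_cast; ring
            have h6 : (e : ZMod m) = ((L + 1 + d : ℕ) : ZMod m) := by
              have := hae ▸ h5
              exact add_left_cancel this
            have := natCast_inj' hlt (by omega) h6
            omega
          · intro hmm; omega
        · rw [h1]
          have h5 : a t = (i + ((L+1 : ℕ) : ZMod m)) + ((e - (L+1) : ℕ) : ZMod m) := by
            rw [hae]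
            push_cast [Nat.cast_sub (by omega : L + 1 ≤ e)]
            ring
          have h6 : (a t ∈ winS L (i + ((L+1 : ℕ) : ZMod m))) ↔ e - (L+1) < L :=
            mem_winS_off (by omega) (by omega) h5
          rw [h6]
          constructor
          · intro _; omega
          · intro _; omega
      rw [hA]
      simp only
      rw [show (Finset.univ.filter fun t : Fin 4 => a t ∈ winS L (i + ((L+1 : ℕ) : ZMod m)))
        = (Finset.univ.filter fun t : Fin 4 => ¬ (a t ∈ winS (L+1) i)) from
        Finset.filter_congr (fun t _ => hpt t)]
      rw [Finset.card_filter_add_card_filter_not]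
      simp
    have hsum0 : (∑ i : ZMod m, ∑ j : ZMod n,
        (|(A L i : ℚ) + (B j : ℚ) - 2| - |(A (L+1) i : ℚ) + (B j : ℚ) - 2|)) = 0 := by
      have hstep : ∀ i : ZMod m, (∑ j : ZMod n,
          (|(A L i : ℚ) + (B j : ℚ) - 2| - |(A (L+1) i : ℚ) + (B j : ℚ) - 2|))
          = (n : ℚ) * (|(A L i : ℚ) - 2| - |(A (L+1) i : ℚ) - 2|) := by
        intro i
        have hptw : ∀ j : ZMod n, (|(A L i : ℚ) + (B j : ℚ) - 2| - |(A (L+1) i : ℚ) + (B j : ℚ) - 2|)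
            = (|(A L i : ℚ) - 2| - |(A (L+1) i : ℚ) - 2|) := by
          intro j; rw [hB0 j]; norm_num
        rw [Finset.sum_congr rfl (fun j _ => hptw j), Finset.sum_const, hcardZn, nsmul_eq_mul]
      rw [Finset.sum_congr rfl (fun i _ => hstep i), ← Finset.mul_sum]
      have hz : (∑ i : ZMod m, (|(A L i : ℚ) - 2| - |(A (L+1) i : ℚ) - 2|)) = 0 := by
        rw [Finset.sum_sub_distrib]
        have heq2 : ∀ i : ZMod m, |(A (L+1) i : ℚ) - 2|
            = |(A L (i + ((L+1:ℕ) : ZMod m)) : ℚ) - 2| := by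
          intro i
          have h4 := hcomp i
          set w := A L (i + ((L+1:ℕ):ZMod m)) with hwdef
          have h6 : ((A (L+1) i : ℕ) : ℚ) + (w : ℚ) = 4 := by
            exact_mod_cast congrArg (Nat.cast : ℕ → ℚ) h4
          have h5 : (A (L+1) i : ℚ) = 4 - (w:ℚ) := by linarith
          rw [h5, show (4:ℚ) - (w : ℚ) - 2 = -((w : ℚ) - 2) from by ring, abs_neg]
        rw [Finset.sum_congr rfl (fun i _ => heq2 i), sub_eq_zero]
        exact (Fintype.sum_equiv (Equiv.addRight (((L+1:ℕ)) : ZMod m))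
          (fun x => |(A L (x + ((L+1:ℕ) : ZMod m)) : ℚ) - 2|)
          (fun y => |(A L y : ℚ) - 2|) (fun x => rfl)).symm
      rw [hz, mul_zero]
    have hV0 : V = 0 := by
      rw [hV2, hsum0]
      norm_num
    refine ⟨Or.inl hV0, ?_⟩
    rw [hV0]
    constructor
    · intro h2; norm_num at h2
    · rintro (⟨h3, _⟩ | ⟨h3, _⟩) <;> norm_num at h3
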